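/- For every sequence {q_n} of positive real numbers, the inequality q_n * p_{n+1} - q_{n+1} * p_n < p_n holds for infinitely many values of n, where p_n denotes the n-th prime. -/

import Mathlib

/-- `p n` is the `n`-th prime number (1-indexed), as a real number. -/
noncomputable def p (n : ℕ) : ℝ := Nat.nth Nat.Prime (n - 1)

lemma nth_prime_pos (n : ℕ) : (0 : ℝ) < Nat.nth Nat.Prime n := by
  have h := (Nat.nth_mem_of_infinite Nat.infinite_setOf_prime n).two_le
  have : (2:ℝ) ≤ (Nat.nth Nat.Prime n : ℝ) := by exact_mod_cast h
  linarith

lemma p_pos (n : ℕ) : 0 < p n := nth_prime_pos _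

lemma not_summable_nth_prime :
    ¬ Summable (fun n : ℕ => 1 / (Nat.nth Nat.Prime n : ℝ)) := by
  intro h
  apply Nat.Primes.not_summable_one_div
  have hb : Function.Bijective
      (fun n : ℕ => (⟨Nat.nth Nat.Prime n,
        Nat.nth_mem_of_infinite Nat.infinite_setOf_prime n⟩ : Nat.Primes)) := by
    constructor
    · intro a b hab
      exact Nat.nth_injective Nat.infinite_setOf_prime (congrArg Subtype.val hab)
    · rintro ⟨x, hx⟩
      have : x ∈ Set.range (Nat.nth Nat.Prime) := by
        rw [Nat.range_nth_of_infinite Nat.infinite_setOf_prime]; exact hx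
      obtain ⟨n, hn⟩ := this
      exact ⟨n, Subtype.ext hn⟩
  exact ((Equiv.ofBijective _ hb).summable_iff).mp h

theorem main_gap_inequality (q : ℕ → ℝ) (hq : ∀ n, 0 < q n) :
    {n : ℕ | q n * p (n + 1) - q (n + 1) * p n < p n}.Infinite := by
  by_contra hfin
  rw [Set.not_infinite] at hfin
  obtain ⟨N, hN⟩ := hfin.bddAbove
  -- for n ≥ N+1, the inequality fails
  have key : ∀ n, N + 1 ≤ n → q n / p n - q (n + 1) / p (n + 1) ≥ 1 / p (n + 1) := by
    intro n hn
    have hnot : ¬ (q n * p (n + 1) - q (n + 1) * p n < p n) := by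
      intro h
      have := hN h
      omega
    push_neg at hnot
    have hpn := p_pos n
    have hpn1 := p_pos (n + 1)
    rw [ge_iff_le, div_sub_div _ _ (ne_of_gt hpn) (ne_of_gt hpn1),
      div_le_div_iff₀ hpn1 (by positivity)]
    nlinarith
  set M := N + 1
  set b : ℕ → ℝ := fun n => q n / p n with hb
  have hbpos : ∀ n, 0 < b n := fun n => div_pos (hq n) (p_pos n)
  have hsum : ∀ m : ℕ, ∑ k ∈ Finset.range m, 1 / p (M + k + 1) ≤ b M := by
    intro m
    have h1 : ∑ k ∈ Finset.range m, 1 / p (M + k + 1)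
        ≤ ∑ k ∈ Finset.range m, (b (M + k) - b (M + k + 1)) := by
      apply Finset.sum_le_sum
      intro k _
      have := key (M + k) (by omega)
      simpa [hb, Nat.add_assoc] using this
    have h2 : ∑ k ∈ Finset.range m, (b (M + k) - b (M + k + 1)) = b M - b (M + m) := by
      have := Finset.sum_range_sub' (fun i => b (M + i)) m
      simpa [Nat.add_assoc] using this
    have := hbpos (M + m)
    linarith
  have hsummable : Summable (fun k : ℕ => 1 / p (M + k + 1)) := by
    apply summable_of_sum_range_le (fun n => le_of_lt (by exact one_div_pos.mpr (p_pos _))) hsum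
  apply not_summable_nth_prime
  have heq : (fun k : ℕ => 1 / p (M + k + 1)) =
      (fun k : ℕ => 1 / (Nat.nth Nat.Prime k : ℝ)) ∘ (fun k => M + k) := by
    funext k
    simp [p, Nat.add_sub_cancel]
  rw [heq] at hsummable
  have : Summable (fun k : ℕ => 1 / (Nat.nth Nat.Prime (k + M) : ℝ)) := by
    simpa [Nat.add_comm, Function.comp_def] using hsummable
  exact (summable_nat_add_iff M).mp this
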